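/- The map sending a lattice path P (with k upsteps, s downsteps, k ≥ s, and 0 ≤ m ≤ k−s) to the path P′ obtained by reflecting the segment of P between its first and last visit to height m in the horizontal line y = m is an involution on the set of such paths, and P visits m from above exactly as many times as P′ visits m−1 from above. -/

import Mathlib

/-- The height of a lattice path after `r` steps, where the path is encoded as
`p : Fin n → Bool` (`true` = upstep `+1`, `false` = downstep `-1`) and starts at height `0`. -/
def height {n : ℕ} (p : Fin n → Bool) (r : ℕ) : ℤ :=
  ∑ i ∈ Finset.univ.filter (fun i : Fin n => (i : ℕ) < r), (if p i then (1 : ℤ) else -1)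

/-- The number of upsteps of a lattice path. -/
def upSteps {n : ℕ} (p : Fin n → Bool) : ℕ :=
  (Finset.univ.filter (fun i => p i = true)).card

/-- The number of times the path `p` visits height `m` from above, i.e. the number of
times `r` such that the height after `r` steps is `m` and the `r`-th step is a downstep
(equivalently, the height after `r - 1` steps is `m + 1`). -/
def visitsFromAbove {n : ℕ} (p : Fin n → Bool) (m : ℤ) : ℕ :=
  ((Finset.Icc 1 n).filter (fun r => height p r = m ∧ height p (r - 1) = m + 1)).card

/-- The first time (number of steps) at which the path `p` is at height `m`. -/
noncomputable def firstAt {n : ℕ} (p : Fin n → Bool) (m : ℤ) : ℕ :=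
  sInf {r : ℕ | height p r = m}

/-- The last time `r ≤ n` at which the path `p` is at height `m`. -/
noncomputable def lastAt {n : ℕ} (p : Fin n → Bool) (m : ℤ) : ℕ :=
  sSup {r : ℕ | r ≤ n ∧ height p r = m}

/-- Reflect the segment of the path between times `b` and `c` (negate each step whose
index lies in `[b, c)`). -/
def reflectSeg {n : ℕ} (p : Fin n → Bool) (b c : ℕ) : Fin n → Bool :=
  fun i => if b ≤ (i : ℕ) ∧ (i : ℕ) < c then !(p i) else p i

namespace Stmt9Aux

def stepFn {n : ℕ} (p : Fin n → Bool) (i : ℕ) : ℤ :=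
  if h : i < n then (if p ⟨i, h⟩ then 1 else -1) else 0

lemma height_eq_sum_range {n : ℕ} (p : Fin n → Bool) (r : ℕ) :
    height p r = ∑ i ∈ Finset.range r, stepFn p i := by
  have h1 : ∀ i : Fin n, stepFn p (i : ℕ) = (if p i then (1:ℤ) else -1) := by
    intro i; simp [stepFn, i.isLt]
  calc height p r = ∑ i : Fin n, (if (i : ℕ) < r then (if p i then (1:ℤ) else -1) else 0) :=
        Finset.sum_filter _ _
    _ = ∑ i : Fin n, (fun j : ℕ => if j < r then stepFn p j else 0) (i : ℕ) := by
        refine Finset.sum_congr rfl fun i _ => ?_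
        simp only [h1]
    _ = ∑ j ∈ Finset.range n, (if j < r then stepFn p j else 0) :=
        Fin.sum_univ_eq_sum_range (fun j => if j < r then stepFn p j else 0) n
    _ = ∑ j ∈ Finset.range n ∩ Finset.range r, stepFn p j := by
        simp only [← Finset.mem_range (n := r)]
        exact Finset.sum_ite_mem _ _ _
    _ = ∑ j ∈ Finset.range (min n r), stepFn p j := by
        congr 1
        ext i
        simp only [Finset.mem_inter, Finset.mem_range, Finset.mem_range]
        omega
    _ = ∑ j ∈ Finset.range r, stepFn p j := by
        refine Finset.sum_subset (Finset.range_subset_range.mpr (min_le_right n r)) ?_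
        intro x hx hx'
        simp only [Finset.mem_range] at hx hx'
        have : ¬ x < n := by omega
        simp [stepFn, this]

lemma height_zero {n : ℕ} (p : Fin n → Bool) : height p 0 = 0 := by
  simp [height_eq_sum_range]

lemma height_succ {n : ℕ} (p : Fin n → Bool) (r : ℕ) :
    height p (r + 1) = height p r + stepFn p r := by
  rw [height_eq_sum_range, height_eq_sum_range, Finset.sum_range_succ]

lemma height_step_up {n : ℕ} (p : Fin n → Bool) (r : ℕ) :
    height p (r + 1) ≤ height p r + 1 := by
  rw [height_succ]
  have : stepFn p r ≤ 1 := by unfold stepFn; split_ifs <;> omega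
  omega

lemma height_step_cases {n : ℕ} (p : Fin n → Bool) (r : ℕ) (hr : r < n) :
    height p (r + 1) = height p r + 1 ∨ height p (r + 1) = height p r - 1 := by
  rw [height_succ]
  have : stepFn p r = 1 ∨ stepFn p r = -1 := by
    unfold stepFn; rw [dif_pos hr]; split_ifs <;> simp
  omega

lemma ivt (f : ℕ → ℤ) (hf : ∀ i, f (i + 1) ≤ f i + 1) (a b : ℕ) (hab : a ≤ b)
    (m : ℤ) (h1 : f a ≤ m) (h2 : m ≤ f b) : ∃ r, a ≤ r ∧ r ≤ b ∧ f r = m := by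
  induction b, hab using Nat.le_induction with
  | base => exact ⟨a, le_refl _, le_refl _, le_antisymm h1 h2⟩
  | succ b hab ih =>
    by_cases h : m ≤ f b
    · obtain ⟨r, h1, h2, h3⟩ := ih h
      exact ⟨r, h1, h2.trans (Nat.le_succ b), h3⟩
    · exact ⟨b + 1, by omega, le_refl _, by have := hf b; omega⟩

lemma height_total {n : ℕ} (p : Fin n → Bool) : height p n = 2 * (upSteps p : ℤ) - n := by
  unfold height upSteps
  rw [Finset.filter_true_of_mem (fun i _ => i.isLt)]
  have : ∀ i : Fin n, (if p i then (1:ℤ) else -1) = 2 * (if p i = true then (1:ℤ) else 0) - 1 := by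
    intro i; by_cases h : p i <;> simp [h]
  rw [Finset.sum_congr rfl (fun i _ => this i), Finset.sum_sub_distrib, ← Finset.mul_sum,
    Finset.sum_boole, Finset.sum_const, Finset.card_univ]
  simp

lemma height_reflectSeg {n : ℕ} (p : Fin n → Bool) (b c : ℕ) (hbc : b ≤ c) (r : ℕ) :
    height (reflectSeg p b c) r =
      height p r - 2 * (height p (min r c) - height p (min r b)) := by
  have hstep : ∀ i : ℕ, stepFn (reflectSeg p b c) i =
      stepFn p i - (if b ≤ i ∧ i < c then 2 * stepFn p i else 0) := by
    intro i
    by_cases hin : i < n <;> by_cases hbi : b ≤ i ∧ i < c <;>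
      simp only [stepFn, reflectSeg, hin, hbi, dif_pos, dif_neg, if_pos, if_neg,
        not_false_iff, dite_true, dite_false] <;>
      first
        | (cases h : p ⟨i, hin⟩ <;> simp [h])
        | simp
  have hfilter : (Finset.range r).filter (fun i => b ≤ i ∧ i < c)
      = Finset.range (min r c) \ Finset.range (min r b) := by
    ext i
    simp only [Finset.mem_filter, Finset.mem_range, Finset.mem_sdiff]
    omega
  rw [height_eq_sum_range, height_eq_sum_range p r, height_eq_sum_range p (min r c),
    height_eq_sum_range p (min r b)]
  rw [Finset.sum_congr rfl (fun i _ => hstep i), Finset.sum_sub_distrib]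
  rw [← Finset.sum_filter, hfilter,
    Finset.sum_sdiff_eq_sub (Finset.range_subset_range.mpr (by omega)), ← Finset.mul_sum, ← Finset.mul_sum]
  ring

end Stmt9Aux

namespace Stmt9Aux

lemma card_shift (c : ℕ) (P : ℕ → Prop) [DecidablePred P] :
    ((Finset.Icc 1 c).filter P).card = ((Finset.range c).filter (fun i => P (i + 1))).card := by
  apply Finset.card_nbij' (i := fun r => r - 1) (j := fun i => i + 1)
  · intro r hr
    simp only [Finset.mem_coe, Finset.mem_filter, Finset.mem_Icc, Finset.mem_range] at hr ⊢
    have h : r - 1 + 1 = r := by omega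
    rw [h]
    exact ⟨by omega, hr.2⟩
  · intro i hi
    simp only [Finset.mem_coe, Finset.mem_filter, Finset.mem_Icc, Finset.mem_range] at hi ⊢
    exact ⟨⟨by omega, by omega⟩, hi.2⟩
  · intro r hr
    simp only [Finset.mem_coe, Finset.mem_filter, Finset.mem_Icc] at hr
    beta_reduce
    omega
  · intro i _
    simp

end Stmt9Aux


theorem stmt_9 (k s : ℕ) (hks : s ≤ k) (m : ℤ) (hm0 : 0 ≤ m) (hm : m ≤ (k : ℤ) - s)
    (p : Fin (k + s) → Bool) (hp : upSteps p = k) :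
    upSteps (reflectSeg p (firstAt p m) (lastAt p m)) = k ∧
    reflectSeg (reflectSeg p (firstAt p m) (lastAt p m))
        (firstAt (reflectSeg p (firstAt p m) (lastAt p m)) m)
        (lastAt (reflectSeg p (firstAt p m) (lastAt p m)) m) = p ∧
    visitsFromAbove p m =
      visitsFromAbove (reflectSeg p (firstAt p m) (lastAt p m)) (m - 1) := by
  classical
  set b := firstAt p m with hbdef
  set c := lastAt p m with hcdef
  have htot : height p (k + s) = (k : ℤ) - s := by
    rw [Stmt9Aux.height_total, hp]; push_cast; ring
  have hup : ∀ i, height p (i + 1) ≤ height p i + 1 := Stmt9Aux.height_step_up p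
  have h0 : height p 0 = 0 := Stmt9Aux.height_zero p
  obtain ⟨r0, -, hr0n, hr0⟩ :=
    Stmt9Aux.ivt (height p) hup 0 (k + s) (Nat.zero_le (k + s)) m (by omega) (by omega)
  have hbm : height p b = m := Nat.sInf_mem (⟨r0, hr0⟩ : Set.Nonempty {r : ℕ | height p r = m})
  have hble : ∀ t, height p t = m → b ≤ t := fun t ht => Nat.sInf_le ht
  have hcB : BddAbove {r : ℕ | r ≤ (k + s) ∧ height p r = m} := ⟨(k + s), fun x hx => hx.1⟩
  have hcmem : c ≤ (k + s) ∧ height p c = m :=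
    Nat.sSup_mem (⟨r0, hr0n, hr0⟩ : Set.Nonempty {r : ℕ | r ≤ (k + s) ∧ height p r = m}) hcB
  have hcn : c ≤ (k + s) := hcmem.1
  have hcm : height p c = m := hcmem.2
  have hcge : ∀ t, t ≤ (k + s) → height p t = m → t ≤ c := fun t h1 h2 => le_csSup hcB ⟨h1, h2⟩
  have hbc : b ≤ c := hble c hcm
  set q := reflectSeg p b c with hqdef
  have hqlow : ∀ r, r ≤ b → height q r = height p r := by
    intro r hr
    rw [hqdef, Stmt9Aux.height_reflectSeg p b c hbc, min_eq_left (hr.trans hbc), min_eq_left hr]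
    ring
  have hqmid : ∀ r, b ≤ r → r ≤ c → height q r = 2 * m - height p r := by
    intro r h1 h2
    rw [hqdef, Stmt9Aux.height_reflectSeg p b c hbc, min_eq_left h2, min_eq_right h1, hbm]
    ring
  have hqhigh : ∀ r, c ≤ r → height q r = height p r := by
    intro r h1
    rw [hqdef, Stmt9Aux.height_reflectSeg p b c hbc, min_eq_right h1,
      min_eq_right (hbc.trans h1), hbm, hcm]
    ring
  have hqset : ∀ r, height q r = m ↔ height p r = m := by
    intro r
    rcases le_or_gt r b with h | h
    · rw [hqlow r h]
    rcases le_or_gt r c with h2 | h2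
    · rw [hqmid r h.le h2]; constructor <;> intro <;> omega
    · rw [hqhigh r h2.le]
  have part1 : upSteps q = k := by
    have h2 := Stmt9Aux.height_total q
    rw [hqhigh (k + s) hcn, htot] at h2
    omega
  have hbq : firstAt q m = b := by
    rw [hbdef]
    unfold firstAt
    congr 1
    ext r
    simp only [Set.mem_setOf_eq]
    exact hqset r
  have hcq : lastAt q m = c := by
    rw [hcdef]
    unfold lastAt
    congr 1
    ext r
    simp only [Set.mem_setOf_eq, hqset r]
  have part2 : reflectSeg q (firstAt q m) (lastAt q m) = p := by
    rw [hbq, hcq]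
    funext i
    by_cases hcond : b ≤ (i : ℕ) ∧ (i : ℕ) < c <;>
      simp [reflectSeg, hqdef, hcond]
  have part3 : visitsFromAbove p m = visitsFromAbove q (m - 1) := by
    unfold visitsFromAbove
    have hD : (Finset.Icc 1 (k + s)).filter (fun r => height p r = m ∧ height p (r - 1) = m + 1)
        = (Finset.Icc 1 c).filter (fun r => height p r = m ∧ height p (r - 1) = m + 1) := by
      ext r
      simp only [Finset.mem_filter, Finset.mem_Icc]
      constructor
      · rintro ⟨⟨h1, h2⟩, h3, h4⟩
        exact ⟨⟨h1, hcge r h2 h3⟩, h3, h4⟩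
      · rintro ⟨⟨h1, h2⟩, h3, h4⟩
        exact ⟨⟨h1, h2.trans hcn⟩, h3, h4⟩
    have hU : (Finset.Icc 1 (k + s)).filter
          (fun r => height q r = m - 1 ∧ height q (r - 1) = m - 1 + 1)
        = (Finset.Icc 1 c).filter (fun r => height p r = m + 1 ∧ height p (r - 1) = m) := by
      ext r
      simp only [Finset.mem_filter, Finset.mem_Icc]
      constructor
      · rintro ⟨⟨h1, h2⟩, h3, h4⟩
        rw [show m - 1 + 1 = m by ring] at h4
        have hpr1 : height p (r - 1) = m := (hqset (r - 1)).mp h4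
        have hb1 : b ≤ r - 1 := hble _ hpr1
        have hc1 : r - 1 ≤ c := hcge _ (by omega) hpr1
        have hrc : r ≤ c := by
          by_contra hrc
          have hqr : height q r = height p r := hqhigh r (by omega)
          rw [h3] at hqr
          obtain ⟨t, ht1, ht2, ht3⟩ :=
            Stmt9Aux.ivt (height p) hup r (k + s) (by omega) m (by omega) (by omega)
          have := hcge t ht2 ht3
          omega
        have hqr : height q r = 2 * m - height p r := hqmid r (by omega) hrc
        exact ⟨⟨h1, hrc⟩, by omega, hpr1⟩
      · rintro ⟨⟨h1, h2⟩, h3, h4⟩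
        have hb1 : b ≤ r - 1 := hble _ h4
        refine ⟨⟨h1, h2.trans hcn⟩, ?_, ?_⟩
        · rw [hqmid r (by omega) h2, h3]; ring
        · rw [hqmid (r - 1) hb1 (by omega), h4]; ring
    rw [hD, hU, Stmt9Aux.card_shift, Stmt9Aux.card_shift]
    simp only [Nat.add_sub_cancel]
    have tele :
        ∑ i ∈ Finset.range c, ((if m + 1 ≤ height p (i + 1) then (1 : ℤ) else 0)
          - (if m + 1 ≤ height p i then (1 : ℤ) else 0))
        = (if m + 1 ≤ height p c then (1 : ℤ) else 0)
          - (if m + 1 ≤ height p 0 then (1 : ℤ) else 0) :=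
      Finset.sum_range_sub (fun i => if m + 1 ≤ height p i then (1 : ℤ) else 0) c
    rw [if_neg (by omega), if_neg (by omega), sub_zero] at tele
    have per : ∀ i ∈ Finset.range c,
        ((if m + 1 ≤ height p (i + 1) then (1 : ℤ) else 0)
          - (if m + 1 ≤ height p i then (1 : ℤ) else 0))
        = ((if height p (i + 1) = m + 1 ∧ height p i = m then (1 : ℤ) else 0)
          - (if height p (i + 1) = m ∧ height p i = m + 1 then (1 : ℤ) else 0)) := by
      intro i hi
      simp only [Finset.mem_range] at hi
      have hstep := Stmt9Aux.height_step_cases p i (by omega)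
      split_ifs <;> omega
    rw [Finset.sum_congr rfl per, Finset.sum_sub_distrib, Finset.sum_boole,
      Finset.sum_boole] at tele
    omega
  exact ⟨part1, part2, part3⟩
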